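/- arXiv:2309.10111 — 6 statements merged into one kernel-verified Lean document; each statement's English description precedes it below -/
import Mathlib

section
/- The inverse of the Meyerson map φ_α satisfies the Lusin (N) condition: it maps Lebesgue measure-zero subsets of ℂ to Lebesgue measure-zero subsets of ℝ². -/
open MeasureTheory

/-- Inverse of the one-dimensional component of the Meyerson map. -/
noncomputable def meyH (α : ℝ) (u : ℝ) : ℝ :=
  Real.sign u * ((α + 1) * |u|) ^ ((α + 1)⁻¹)

lemma meyH_pos {α : ℝ} (hα : 0 < α) {x : ℝ} (hx : 0 < x) :
    meyH α (x * |x| ^ α / (α + 1)) = x := by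
  have hα1 : (0:ℝ) < α + 1 := by linarith
  have hc : 0 < x * |x| ^ α / (α + 1) := by
    apply div_pos _ hα1
    exact mul_pos hx (Real.rpow_pos_of_pos (abs_pos.mpr hx.ne') α)
  unfold meyH
  rw [Real.sign_of_pos hc, abs_of_pos hc, one_mul,
    mul_div_cancel₀ _ hα1.ne', abs_of_pos hx,
    show x * x ^ α = x ^ (1 + α) by rw [Real.rpow_add hx, Real.rpow_one],
    ← Real.rpow_mul hx.le,
    show (1 + α) * (α + 1)⁻¹ = 1 by rw [add_comm 1 α]; exact mul_inv_cancel₀ hα1.ne',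
    Real.rpow_one]

lemma meyH_left_inv {α : ℝ} (hα : 0 < α) (x : ℝ) :
    meyH α (x * |x| ^ α / (α + 1)) = x := by
  rcases lt_trichotomy x 0 with hx | hx | hx
  · have := meyH_pos hα (x := -x) (by linarith)
    rw [abs_neg] at this
    have hodd : meyH α (-(x * |x| ^ α / (α + 1))) = -x := by
      rw [show -(x * |x| ^ α / (α + 1)) = -x * |x| ^ α / (α + 1) by ring]
      exact this
    unfold meyH at hodd ⊢
    rw [Real.sign_neg, abs_neg] at hodd
    linarith [hodd]
  · simp [hx, meyH]
  · exact meyH_pos hα hx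

lemma meyH_diff {α : ℝ} (hα : 0 < α) {u : ℝ} (hu : u ≠ 0) :
    DifferentiableAt ℝ (meyH α) u := by
  have hα1 : (0:ℝ) < α + 1 := by linarith
  rcases hu.lt_or_gt with hu | hu
  · have hev : meyH α =ᶠ[nhds u] fun v => -(((α + 1) * (-v)) ^ ((α + 1)⁻¹)) := by
      filter_upwards [IsOpen.mem_nhds isOpen_Iio hu] with v hv
      simp only [Set.mem_Iio] at hv
      unfold meyH
      rw [Real.sign_of_neg hv, abs_of_neg hv]
      ring
    rw [Filter.EventuallyEq.differentiableAt_iff hev]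
    apply DifferentiableAt.neg
    apply DifferentiableAt.rpow_const
    · fun_prop
    · left
      exact (mul_pos hα1 (neg_pos.mpr hu)).ne'
  · have hev : meyH α =ᶠ[nhds u] fun v => ((α + 1) * v) ^ ((α + 1)⁻¹) := by
      filter_upwards [IsOpen.mem_nhds isOpen_Ioi hu] with v hv
      simp only [Set.mem_Ioi] at hv
      unfold meyH
      rw [Real.sign_of_pos hv, abs_of_pos hv, one_mul]
    rw [Filter.EventuallyEq.differentiableAt_iff hev]
    apply DifferentiableAt.rpow_const
    · fun_prop
    · left
      exact (mul_pos hα1 hu).ne'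

/-- The inverse of the Meyerson map `φ_α` satisfies the Lusin (N) condition: preimages
under the (bijective) Meyerson map of Lebesgue measure-zero subsets of `ℂ` have
Lebesgue measure zero in `ℝ²`. -/
theorem meyerson_inv_lusinN (α : ℝ) (hα : 0 < α)
    (hbij : Function.Bijective
      (fun p : ℝ × ℝ => (↑(p.1 * |p.1| ^ α / (α + 1)) : ℂ) + p.2 * Complex.I)) :
    ∀ s : Set ℂ, volume s = 0 →
      volume ((fun p : ℝ × ℝ => (↑(p.1 * |p.1| ^ α / (α + 1)) : ℂ) + p.2 * Complex.I) ⁻¹' s) = 0 := by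
  intro s hs
  set ψ : ℂ → ℂ := fun z => (meyH α z.re : ℂ) + z.im * Complex.I with hψ
  set L : Set ℂ := {z : ℂ | z.re = 0} with hL
  have he : MeasurePreserving Complex.measurableEquivRealProd :=
    Complex.volume_preserving_equiv_real_prod
  have hLnull : volume L = 0 := by
    have hLeq : L = Complex.measurableEquivRealProd ⁻¹' (({0} : Set ℝ) ×ˢ Set.univ) := by
      ext z
      simp [hL, Complex.measurableEquivRealProd_apply, Set.mem_prod, eq_comm]
    rw [hLeq]
    apply he.quasiMeasurePreserving.preimage_null
    rw [Measure.volume_eq_prod, Measure.prod_prod]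
    simp
  have hψs : volume (ψ '' s) = 0 := by
    have hsplit : ψ '' s ⊆ ψ '' (s \ L) ∪ L := by
      rintro _ ⟨z, hz, rfl⟩
      by_cases hzl : z ∈ L
      · right
        simp only [hL, Set.mem_setOf_eq] at hzl ⊢
        simp [hψ, hzl, meyH]
      · left
        exact ⟨z, ⟨hz, hzl⟩, rfl⟩
    have h1 : volume (ψ '' (s \ L)) = 0 := by
      refine MeasureTheory.addHaar_image_eq_zero_of_differentiableOn_of_addHaar_eq_zero
        (volume : Measure ℂ) ?_ (measure_mono_null Set.diff_subset hs)
      · intro z hz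
        apply DifferentiableAt.differentiableWithinAt
        apply DifferentiableAt.add
        · exact Complex.ofRealCLM.differentiableAt.comp z
            ((meyH_diff hα hz.2).comp z (Complex.reCLM.differentiableAt))
        · apply DifferentiableAt.mul_const
          exact Complex.ofRealCLM.differentiableAt.comp z Complex.imCLM.differentiableAt

    have h2 := measure_union_le (μ := (volume : Measure ℂ)) (ψ '' (s \ L)) L
    rw [h1, hLnull, add_zero] at h2
    exact le_antisymm ((measure_mono hsplit).trans h2) (zero_le)
  have hsub : (fun p : ℝ × ℝ => (↑(p.1 * |p.1| ^ α / (α + 1)) : ℂ) + p.2 * Complex.I) ⁻¹' s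
      ⊆ Complex.measurableEquivRealProd.symm ⁻¹' (ψ '' s) := by
    intro p hp
    simp only [Set.mem_preimage] at hp ⊢
    refine ⟨(↑(p.1 * |p.1| ^ α / (α + 1)) : ℂ) + p.2 * Complex.I, hp, ?_⟩
    have hre : ((↑(p.1 * |p.1| ^ α / (α + 1)) : ℂ) + p.2 * Complex.I).re
        = p.1 * |p.1| ^ α / (α + 1) := by
      simp only [Complex.add_re, Complex.ofReal_re, Complex.mul_re, Complex.I_re,
        Complex.I_im, Complex.ofReal_im]
      ring
    have him : ((↑(p.1 * |p.1| ^ α / (α + 1)) : ℂ) + p.2 * Complex.I).im = p.2 := by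
      simp only [Complex.add_im, Complex.ofReal_im, Complex.mul_im, Complex.I_re,
        Complex.I_im, Complex.ofReal_re]
      ring
    have hkey : ψ ((↑(p.1 * |p.1| ^ α / (α + 1)) : ℂ) + p.2 * Complex.I)
        = (p.1 : ℂ) + p.2 * Complex.I := by
      rw [hψ]
      simp only [hre, him, meyH_left_inv hα]
    rw [hkey, Complex.measurableEquivRealProd_symm_apply]
    apply Complex.ext <;> simp
  refine le_antisymm (le_trans (measure_mono hsub) ?_) (zero_le)
  exact ((MeasurePreserving.symm _ he).quasiMeasurePreserving.preimage_null hψs).le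
end

section
/- Let u = u₁ + iu₂ be a holomorphic function on an open set Ω ⊆ ℂ with u'(z) ≠ 0 for all z ∈ Ω, and suppose u₁(0,y) = 0 for all points iy ∈ Ω on the imaginary axis. Then for every point iy₀ ∈ Ω, the limit of u₁(x,y)/x as (x,y) → (0,y₀) (through points with x ≠ 0) exists and equals ∂u₁/∂x(0,y₀), which is nonzero. -/
open Filter Topology

/-- If `u` is holomorphic on an open set `Ω` with nowhere-vanishing derivative and
`Re u` vanishes on `Ω ∩ {Re z = 0}`, then at every point `z₀ = iy₀ ∈ Ω`,
`Re u(z)/Re z → ∂(Re u)/∂x (z₀)` as `z → z₀` through points with `Re z ≠ 0`,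
and this partial derivative is nonzero. -/
theorem meyerson_boundary_limit (Ω : Set ℂ) (hΩ : IsOpen Ω) (u : ℂ → ℂ)
    (hu : DifferentiableOn ℂ u Ω) (hu' : ∀ z ∈ Ω, deriv u z ≠ 0)
    (hvanish : ∀ z ∈ Ω, z.re = 0 → (u z).re = 0) :
    ∀ z₀ ∈ Ω, z₀.re = 0 →
      fderiv ℝ (fun z => (u z).re) z₀ 1 ≠ 0 ∧
      Tendsto (fun z : ℂ => (u z).re / z.re)
        (𝓝[{z : ℂ | z.re ≠ 0}] z₀)
        (𝓝 (fderiv ℝ (fun z => (u z).re) z₀ 1)) := by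
  intro z₀ hz₀ hre
  have hmem : Ω ∈ 𝓝 z₀ := hΩ.mem_nhds hz₀
  have hderivat : ∀ w ∈ Ω, HasDerivAt u (deriv u w) w := fun w hw =>
    (hu.differentiableAt (hΩ.mem_nhds hw)).hasDerivAt
  -- real fderiv of Re ∘ u at points of Ω
  have hfd : ∀ w ∈ Ω, HasFDerivAt (fun z => (u z).re)
      (Complex.reCLM.comp
        (((ContinuousLinearMap.smulRight (1 : ℂ →L[ℂ] ℂ) (deriv u w))).restrictScalars ℝ)) w := by
    intro w hw
    exact Complex.reCLM.hasFDerivAt.comp w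
      (((hderivat w hw).hasFDerivAt).restrictScalars ℝ)
  have hfderiv1 : fderiv ℝ (fun z => (u z).re) z₀ 1 = (deriv u z₀).re := by
    rw [(hfd z₀ hz₀).fderiv]
    simp
  -- derivative along vertical curves
  have key : ∀ (y t : ℝ), (↑t + ↑y * Complex.I) ∈ Ω →
      HasDerivAt (fun s : ℝ => (u (↑s + ↑y * Complex.I)).re)
        ((deriv u (↑t + ↑y * Complex.I)).re) t := by
    intro y t hw
    have hγ : HasDerivAt (fun s : ℝ => ((s : ℂ) + ↑y * Complex.I)) 1 t := by
      simpa using (Complex.ofRealCLM.hasDerivAt (x := t)).add_const (↑y * Complex.I)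
    have h1 := ((hfd _ hw).comp_hasDerivAt t hγ)
    simp at h1
    exact h1
  -- Im (deriv u z₀) = 0
  have him : (deriv u z₀).im = 0 := by
    have hγ : HasDerivAt (fun s : ℝ => (z₀ + ↑s * Complex.I)) Complex.I 0 := by
      simpa using (((Complex.ofRealCLM.hasDerivAt (x := (0:ℝ))).mul_const Complex.I).const_add z₀)
    have hfd0 : HasFDerivAt (fun z => (u z).re)
        (Complex.reCLM.comp
          (((ContinuousLinearMap.smulRight (1 : ℂ →L[ℂ] ℂ) (deriv u z₀))).restrictScalars ℝ))
        (z₀ + (↑(0:ℝ)) * Complex.I) := by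
      convert hfd z₀ hz₀ using 2
      simp
    have h1 := hfd0.comp_hasDerivAt 0 hγ
    have h2 : HasDerivAt (fun s : ℝ => (u (z₀ + ↑s * Complex.I)).re)
        (-(deriv u z₀).im) 0 := by
      refine HasDerivAt.congr_deriv h1 ?_
      simp [Complex.mul_im]
    have hev : (fun s : ℝ => (u (z₀ + ↑s * Complex.I)).re) =ᶠ[𝓝 (0:ℝ)] (fun _ => 0) := by
      have hcont : ContinuousAt (fun s : ℝ => z₀ + ↑s * Complex.I) 0 := by fun_prop
      have : ∀ᶠ s : ℝ in 𝓝 0, z₀ + ↑s * Complex.I ∈ Ω := by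
        have := hcont.preimage_mem_nhds (by simpa using hmem)
        exact this
      filter_upwards [this] with s hs
      exact hvanish _ hs (by simp [hre])
    have h3 : HasDerivAt (fun _ : ℝ => (0:ℝ)) (-(deriv u z₀).im) 0 :=
      h2.congr_of_eventuallyEq hev.symm
    have h4 : -(deriv u z₀).im = 0 := by
      have := h3.deriv
      simpa using this.symm
    linarith
  have hc0 : (deriv u z₀).re ≠ 0 := by
    intro h
    exact hu' z₀ hz₀ (Complex.ext h him)
  rw [hfderiv1]
  refine ⟨hc0, ?_⟩
  set c := (deriv u z₀).re with hc
  -- continuity of (deriv u).re at z₀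
  have hanal : AnalyticOnNhd ℂ u Ω := hu.analyticOnNhd hΩ
  have hcontd : ContinuousAt (fun w => (deriv u w).re) z₀ :=
    Complex.continuous_re.continuousAt.comp ((hanal.deriv z₀ hz₀).continuousAt)
  rw [Metric.tendsto_nhdsWithin_nhds]
  intro ε hε
  obtain ⟨δ₁, hδ₁, hδ₁'⟩ := Metric.continuousAt_iff.mp hcontd (ε/2) (by linarith)
  obtain ⟨δ₂, hδ₂, hδ₂'⟩ := Metric.isOpen_iff.mp hΩ z₀ hz₀
  set δ' := min δ₁ δ₂ with hδ'
  have hδ'pos : 0 < δ' := lt_min hδ₁ hδ₂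
  refine ⟨δ' / 2, by linarith, ?_⟩
  intro z hzre hzd
  have hzre' : z.re ≠ 0 := hzre
  -- segment points are in the ball of radius δ'
  have hseg : ∀ t ∈ Set.uIcc (0:ℝ) z.re, (↑t + ↑z.im * Complex.I) ∈ Metric.ball z₀ δ' := by
    intro t ht
    have ht' : |t| ≤ |z.re| := by
      rw [Set.uIcc_eq_union] at ht
      rcases ht with h | h <;> rw [Set.mem_Icc] at h <;>
        cases' abs_cases z.re with h2 h2 <;> rw [abs_le] <;> constructor <;> linarith [h.1, h.2]
    have hre_le : |z.re| ≤ dist z z₀ := by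
      have := Complex.abs_re_le_norm (z - z₀)
      simpa [Complex.dist_eq, hre] using this
    have him_le : |z.im - z₀.im| ≤ dist z z₀ := by
      have := Complex.abs_im_le_norm (z - z₀)
      simpa [Complex.dist_eq] using this
    have : dist (↑t + ↑z.im * Complex.I) z₀ ≤ |t| + |z.im - z₀.im| := by
      rw [Complex.dist_eq]
      have h := Complex.norm_le_abs_re_add_abs_im (↑t + ↑z.im * Complex.I - z₀)
      simpa [hre] using h
    rw [Metric.mem_ball]
    calc dist (↑t + ↑z.im * Complex.I) z₀ ≤ |t| + |z.im - z₀.im| := this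
      _ ≤ dist z z₀ + dist z z₀ := add_le_add (ht'.trans hre_le) him_le
      _ < δ' := by linarith
  have hsegΩ : ∀ t ∈ Set.uIcc (0:ℝ) z.re, (↑t + ↑z.im * Complex.I) ∈ Ω := by
    intro t ht
    exact hδ₂' (Metric.ball_subset_ball (min_le_right _ _) (hseg t ht))
  have hg : ∀ t ∈ Set.uIcc (0:ℝ) z.re,
      HasDerivWithinAt (fun s : ℝ => (u (↑s + ↑z.im * Complex.I)).re - c * s)
        ((deriv u (↑t + ↑z.im * Complex.I)).re - c) (Set.uIcc 0 z.re) t := by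
    intro t ht
    have hcs : HasDerivAt (fun s : ℝ => c * s) c t := by
      simpa using (hasDerivAt_id t).const_mul c
    exact ((key z.im t (hsegΩ t ht)).sub hcs).hasDerivWithinAt
  have hbound : ∀ t ∈ Set.uIcc (0:ℝ) z.re,
      ‖(deriv u (↑t + ↑z.im * Complex.I)).re - c‖ ≤ ε/2 := by
    intro t ht
    have hball := hseg t ht
    have hd1 : dist (↑t + ↑z.im * Complex.I) z₀ < δ₁ :=
      lt_of_lt_of_le (Metric.mem_ball.mp hball) (min_le_left _ _)
    have := hδ₁' hd1
    rw [Real.dist_eq] at this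
    exact le_of_lt this
  have hmvt := Convex.norm_image_sub_le_of_norm_hasDerivWithin_le hg hbound
      (convex_uIcc _ _) Set.left_mem_uIcc Set.right_mem_uIcc
  have h0 : (u (↑z.im * Complex.I)).re = 0 := by
    apply hvanish _ (by simpa using hsegΩ 0 Set.left_mem_uIcc)
    simp
  have hzeq : ((z.re : ℂ) + ↑z.im * Complex.I) = z := Complex.re_add_im z
  have hfin : |(u z).re - c * z.re| ≤ ε/2 * |z.re| := by
    simpa [hzeq, h0, Real.norm_eq_abs] using hmvt
  rw [Real.dist_eq]
  have heq : (u z).re / z.re - c = ((u z).re - c * z.re) / z.re := by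
    field_simp
  rw [heq, abs_div]
  rw [div_lt_iff₀ (abs_pos.mpr hzre')]
  calc |(u z).re - c * z.re| ≤ ε/2 * |z.re| := hfin
    _ < ε * |z.re| := by
        have : 0 < |z.re| := abs_pos.mpr hzre'
        nlinarith
end

section
/- Suppose g = (g₁,g₂) is differentiable at a point p with x ≠ 0 and g₁(p) ≠ 0, and suppose |g₁|^α X g₁ = Y_α g₂ and |g₁|^α Y_α g₁ = −X g₂ at p (the Grushin Cauchy–Riemann system), with D_α g(p) nonsingular. Then W̄g(p) = 0 and Wg(p) ≠ 0. Conversely, if W̄g(p) = 0 and Wg(p) ≠ 0 then the Grushin Cauchy–Riemann system holds at p and D_α g(p) is nonsingular. -/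
lemma grushin_key (A B a b c d : ℝ) (hA : 0 < A) (hB : 0 < B) :
    (A * a = B * d ∧ A * (B * b) = -c ∧
      Matrix.det !![a, B * b; c / A, B * d / A] ≠ 0) ↔
    ((A * a - B * d = 0 ∧ c + A * B * b = 0) ∧
      (A * a + B * d ≠ 0 ∨ c - A * B * b ≠ 0)) := by
  rw [Matrix.det_fin_two_of]
  constructor
  · rintro ⟨h1, h2, h3⟩
    refine ⟨⟨by linarith, by linarith⟩, ?_⟩
    by_contra h
    push_neg at h
    obtain ⟨ha, hb⟩ := h
    have ha0 : a = 0 := by nlinarith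
    have hd0 : d = 0 := by nlinarith
    have hc0 : c = 0 := by nlinarith
    have hb0 : b = 0 := by nlinarith [mul_pos hA hB]
    exact h3 (by simp [ha0, hd0, hc0, hb0])
  · rintro ⟨⟨h1, h2⟩, h3⟩
    have hd : B * d = A * a := by linarith
    have hc : c = -(A * (B * b)) := by linarith
    refine ⟨hd.symm, by linarith, ?_⟩
    have : a * (B * d / A) - B * b * (c / A) = a ^ 2 + B ^ 2 * b ^ 2 := by
      rw [hd, hc]; field_simp; ring
    rw [this]
    rcases h3 with h | h
    · have ha : a ≠ 0 := fun h0 => h (by rw [hd] at *; nlinarith)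
      positivity
    · have hb : b ≠ 0 := fun h0 => h (by rw [hc, h0]; ring)
      positivity

/-- The Grushin Cauchy–Riemann system `|g₁|^α Xg₁ = Y_α g₂`, `|g₁|^α Y_α g₁ = −Xg₂`
together with nonsingularity of `D_α g` at a point `p` (with `p.1 ≠ 0`, `g₁(p) ≠ 0`)
is equivalent to `W̄g(p) = 0` and `Wg(p) ≠ 0`. -/
theorem grushin_CR_iff_wirtinger (α : ℝ) (hα : 0 < α) (g : ℝ × ℝ → ℝ × ℝ) (p : ℝ × ℝ)
    (hdiff : DifferentiableAt ℝ g p) (hx : p.1 ≠ 0) (hg1 : (g p).1 ≠ 0)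
    (g1x g1y g2x g2y : ℝ)
    (h1x : g1x = fderiv ℝ (fun q => (g q).1) p (1, 0))
    (h1y : g1y = fderiv ℝ (fun q => (g q).1) p (0, 1))
    (h2x : g2x = fderiv ℝ (fun q => (g q).2) p (1, 0))
    (h2y : g2y = fderiv ℝ (fun q => (g q).2) p (0, 1)) :
    (|(g p).1| ^ α * g1x = |p.1| ^ α * g2y ∧
     |(g p).1| ^ α * (|p.1| ^ α * g1y) = -g2x ∧
     Matrix.det !![g1x, |p.1| ^ α * g1y;
                   g2x / |(g p).1| ^ α, |p.1| ^ α * g2y / |(g p).1| ^ α] ≠ 0) ↔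
    (Complex.ofReal (|(g p).1| ^ α * g1x - |p.1| ^ α * g2y) +
        Complex.ofReal (g2x + |p.1 * (g p).1| ^ α * g1y) * Complex.I = 0 ∧
     Complex.ofReal (|(g p).1| ^ α * g1x + |p.1| ^ α * g2y) +
        Complex.ofReal (g2x - |p.1 * (g p).1| ^ α * g1y) * Complex.I ≠ 0) := by
  have hA : (0:ℝ) < |(g p).1| ^ α := Real.rpow_pos_of_pos (abs_pos.2 hg1) α
  have hB : (0:ℝ) < |p.1| ^ α := Real.rpow_pos_of_pos (abs_pos.2 hx) α
  have habs : |p.1 * (g p).1| ^ α = |(g p).1| ^ α * |p.1| ^ α := by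
    rw [abs_mul, Real.mul_rpow (abs_nonneg _) (abs_nonneg _), mul_comm]
  rw [habs]
  have hz : ∀ u v : ℝ, (Complex.ofReal u + Complex.ofReal v * Complex.I = 0) ↔
      (u = 0 ∧ v = 0) := by
    intro u v
    rw [Complex.ext_iff]
    simp
  have hz' : ∀ u v : ℝ, (Complex.ofReal u + Complex.ofReal v * Complex.I ≠ 0) ↔
      (u ≠ 0 ∨ v ≠ 0) := by
    intro u v
    rw [Ne, hz, not_and_or]
  rw [hz, hz']
  exact grushin_key _ _ g1x g1y g2x g2y hA hB
end

section
/- For α > 0, a ∈ ℝ \ {0}, b ∈ ℝ, the map g : ℝ² → ℝ², g(x,y) = (sign(a)·|a|^{1/(α+1)}·x, a·y + b), satisfies φ_α ∘ g = g̃ ∘ φ_α where g̃(z) = a·z + i·b and φ_α(x,y) = x|x|^α/(α+1) + iy. -/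
/-- For `a ≠ 0`, `b ∈ ℝ`, the map `g(x,y) = (sign(a)|a|^{1/(α+1)}x, ay + b)` is
conjugated by the Meyerson map `φ_α` to the affine map `z ↦ az + ib`:
`φ_α ∘ g = g̃ ∘ φ_α`. -/
theorem entire_grushin_conformal_form (α : ℝ) (hα : 0 < α) (a b : ℝ) (ha : a ≠ 0) :
    ∀ p : ℝ × ℝ,
      (fun q : ℝ × ℝ => Complex.ofReal (q.1 * |q.1| ^ α / (α + 1)) +
          Complex.ofReal q.2 * Complex.I)
        (Real.sign a * |a| ^ (1 / (α + 1)) * p.1, a * p.2 + b) =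
      (a : ℂ) *
        ((fun q : ℝ × ℝ => Complex.ofReal (q.1 * |q.1| ^ α / (α + 1)) +
          Complex.ofReal q.2 * Complex.I) p) + Complex.I * (b : ℂ) := by
  rintro ⟨x, y⟩
  simp only
  set s := Real.sign a with hs
  set c := |a| ^ (1 / (α + 1)) with hc
  have habs : (0:ℝ) < |a| := abs_pos.mpr ha
  have hcpos : (0:ℝ) < c := Real.rpow_pos_of_pos habs _
  have hsabs : |s| = 1 := by
    rcases Real.sign_apply_eq_of_ne_zero a ha with h | h <;> simp [hs, h]
  have key : (s * c * x) * |s * c * x| ^ α = a * (x * |x| ^ α) := by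
    have h1 : |s * c * x| = c * |x| := by
      rw [abs_mul, abs_mul, hsabs, abs_of_pos hcpos]; ring
    rw [h1, Real.mul_rpow hcpos.le (abs_nonneg x)]
    have h2 : c * c ^ α = |a| := by
      have hca : c ^ α = |a| ^ (1 / (α + 1) * α) := by
        rw [hc, ← Real.rpow_mul habs.le]
      rw [hca, hc, ← Real.rpow_add habs,
        show (1:ℝ) / (α + 1) + 1 / (α + 1) * α = 1 by field_simp; ring,
        Real.rpow_one]
    have h3 : s * |a| = a := by
      rcases lt_or_gt_of_ne ha with h | h
      · rw [hs, Real.sign_of_neg h, abs_of_neg h]; ring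
      · rw [hs, Real.sign_of_pos h, abs_of_pos h]; ring
    calc s * c * x * (c ^ α * |x| ^ α) = s * (c * c ^ α) * (x * |x| ^ α) := by ring
      _ = a * (x * |x| ^ α) := by rw [h2, h3]
  rw [show s * c * x * |s * c * x| ^ α / (α + 1) = a * (x * |x| ^ α) / (α + 1) by
    rw [key]]
  push_cast
  ring
end

section
/- Let α > 0 and let g̃ be holomorphic on an open set U ⊆ ℂ. Define g = φ_α^{-1} ∘ g̃ ∘ φ_α on φ_α^{-1}(U) and suppose p = (x,y) with x ≠ 0 and g₁(p) ≠ 0 (where g = (g₁,g₂)). Then at p, the Grushin Wirtinger derivative satisfies W̄g(p) = |x|^α · (∂g̃/∂z̄)(φ_α(p)) = 0. -/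
open Real Complex

private lemma real_sign_mul_abs' (u : ℝ) : Real.sign u * |u| = u := by
  rcases lt_trichotomy u 0 with h | h | h
  · rw [Real.sign_of_neg h, abs_of_neg h]; ring
  · simp [h]
  · rw [Real.sign_of_pos h, abs_of_pos h]; ring

private lemma sign_eq_signType' {u : ℝ} (hu : u ≠ 0) :
    (SignType.sign u : ℝ) = Real.sign u := by
  rcases hu.lt_or_gt with h | h
  · rw [Real.sign_of_neg h, sign_neg h]; norm_num
  · rw [Real.sign_of_pos h, sign_pos h]; norm_num

private lemma mul_sign' {w : ℝ} (hw : w ≠ 0) : w * Real.sign w = |w| := by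
  rcases hw.lt_or_gt with h | h
  · rw [Real.sign_of_neg h, abs_of_neg h]; ring
  · rw [Real.sign_of_pos h, abs_of_pos h]; ring

private lemma sign_sq' {w : ℝ} (hw : w ≠ 0) : Real.sign w * Real.sign w = 1 := by
  rcases hw.lt_or_gt with h | h
  · rw [Real.sign_of_neg h]; norm_num
  · rw [Real.sign_of_pos h]; norm_num

/-- derivative of `k u = u * |u|^α / (α+1)` at `w ≠ 0` is `|w|^α`. -/
private lemma hasDerivAt_k' (α : ℝ) (hα : 0 < α) {w : ℝ} (hw : w ≠ 0) :
    HasDerivAt (fun v : ℝ => v * |v| ^ α / (α + 1)) (|w| ^ α) w := by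
  have habs : HasDerivAt (fun v : ℝ => |v|) ((SignType.sign w : ℝ)) w := hasDerivAt_abs hw
  have hpow : HasDerivAt (fun v : ℝ => |v| ^ α)
      ((SignType.sign w : ℝ) * α * |w| ^ (α - 1)) w :=
    habs.rpow_const (Or.inl (abs_ne_zero.mpr hw))
  have hmul := (hasDerivAt_id w).mul hpow
  have hdiv := hmul.div_const (α + 1)
  refine hdiv.congr_deriv (Eq.symm ?_)
  rw [sign_eq_signType' hw]
  have habs' : |w| * |w| ^ (α - 1) = |w| ^ α := by
    nth_rewrite 1 [← Real.rpow_one (|w|)]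
    rw [← Real.rpow_add (abs_pos.mpr hw)]
    norm_num
  have key : id w * (Real.sign w * α * |w| ^ (α - 1)) = α * |w| ^ α := by
    simp only [id_eq]
    calc w * (Real.sign w * α * |w| ^ (α - 1))
        = (w * Real.sign w) * (α * |w| ^ (α - 1)) := by ring
      _ = |w| * (α * |w| ^ (α - 1)) := by rw [mul_sign' hw]
      _ = α * (|w| * |w| ^ (α - 1)) := by ring
      _ = α * |w| ^ α := by rw [habs']
  rw [key, one_mul]
  field_simp
  ring

/-- derivative of `h u = sign u * ((α+1)|u|)^(1/(α+1))` exists at `u ≠ 0`. -/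
private lemma hasDerivAt_h' (α : ℝ) (hα : 0 < α) {u : ℝ} (hu : u ≠ 0) :
    ∃ d : ℝ, HasDerivAt (fun v : ℝ => Real.sign v * ((α + 1) * |v|) ^ (1 / (α + 1))) d u := by
  have habs : HasDerivAt (fun v : ℝ => |v|) ((SignType.sign u : ℝ)) u := hasDerivAt_abs hu
  have hinner : HasDerivAt (fun v : ℝ => (α + 1) * |v|)
      ((α + 1) * (SignType.sign u : ℝ)) u := habs.const_mul _
  have hne : (α + 1) * |u| ≠ 0 := by
    have h1 : (0:ℝ) < α + 1 := by linarith
    have h2 : (0:ℝ) < |u| := abs_pos.mpr hu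
    positivity
  have hr := hinner.rpow_const (p := 1 / (α + 1)) (Or.inl hne)
  refine ⟨Real.sign u * ((α + 1) * (SignType.sign u : ℝ) * (1 / (α + 1)) *
    ((α + 1) * |u|) ^ (1 / (α + 1) - 1)), ?_⟩
  refine (hr.const_mul (Real.sign u)).congr_of_eventuallyEq ?_
  rcases hu.lt_or_gt with h | h
  · filter_upwards [eventually_lt_nhds h] with v hv
    rw [Real.sign_of_neg hv, Real.sign_of_neg h]
  · filter_upwards [eventually_gt_nhds h] with v hv
    rw [Real.sign_of_pos hv, Real.sign_of_pos h]

/-- `k ∘ h = id`. -/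
private lemma k_h_id (α : ℝ) (hα : 0 < α) (u : ℝ) :
    (Real.sign u * ((α + 1) * |u|) ^ (1 / (α + 1))) *
      |Real.sign u * ((α + 1) * |u|) ^ (1 / (α + 1))| ^ α / (α + 1) = u := by
  rcases eq_or_ne u 0 with rfl | hu
  · simp
  have hA : (0:ℝ) < α + 1 := by linarith
  have hx : (0:ℝ) < (α + 1) * |u| := by
    have := abs_pos.mpr hu; positivity
  have habsh : |Real.sign u * ((α + 1) * |u|) ^ (1 / (α + 1))|
      = ((α + 1) * |u|) ^ (1 / (α + 1)) := by
    rw [abs_mul, _root_.abs_of_nonneg (Real.rpow_nonneg hx.le _)]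
    rcases hu.lt_or_gt with h | h
    · rw [Real.sign_of_neg h]; norm_num
    · rw [Real.sign_of_pos h]; norm_num
  rw [habsh, ← Real.rpow_mul hx.le, mul_assoc, ← Real.rpow_add hx,
    show 1 / (α + 1) + 1 / (α + 1) * α = 1 by field_simp; ring, Real.rpow_one]
  rw [show Real.sign u * ((α + 1) * |u|) / (α + 1) = Real.sign u * |u| * ((α+1)/(α+1)) by ring,
    div_self (by linarith : α + (1:ℝ) ≠ 0), mul_one, real_sign_mul_abs']

/-- If `g̃` is holomorphic on an open `U ⊆ ℂ` and `g = φ_α⁻¹ ∘ g̃ ∘ φ_α`, then at a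
point `p` with `p.1 ≠ 0` and `g₁(p) ≠ 0` one has
`W̄g(p) = |p.1|^α · (∂g̃/∂z̄)(φ_α(p)) = 0`. -/
theorem grushin_conjugate_antiholomorphic_vanishes (α : ℝ) (hα : 0 < α)
    (U : Set ℂ) (hU : IsOpen U) (gt : ℂ → ℂ) (hgt : DifferentiableOn ℂ gt U)
    (φ : ℝ × ℝ → ℂ)
    (hφ : ∀ q : ℝ × ℝ, φ q = Complex.ofReal (q.1 * |q.1| ^ α / (α + 1)) +
      Complex.ofReal q.2 * Complex.I)
    (ψ : ℂ → ℝ × ℝ)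
    (hψ : ∀ z : ℂ, ψ z = (Real.sign z.re * ((α + 1) * |z.re|) ^ (1 / (α + 1)), z.im))
    (g : ℝ × ℝ → ℝ × ℝ) (hg : ∀ q : ℝ × ℝ, g q = ψ (gt (φ q)))
    (p : ℝ × ℝ) (hpU : φ p ∈ U) (hx : p.1 ≠ 0) (hg1 : (g p).1 ≠ 0) :
    Complex.ofReal (|(g p).1| ^ α * fderiv ℝ (fun q => (g q).1) p (1, 0) -
        |p.1| ^ α * fderiv ℝ (fun q => (g q).2) p (0, 1)) +
      Complex.ofReal (fderiv ℝ (fun q => (g q).2) p (1, 0) +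
        |p.1 * (g p).1| ^ α * fderiv ℝ (fun q => (g q).1) p (0, 1)) * Complex.I =
      Complex.ofReal (|p.1| ^ α) *
        ((fderiv ℝ gt (φ p) 1 + Complex.I * fderiv ℝ gt (φ p) Complex.I) / 2) ∧
    Complex.ofReal (|(g p).1| ^ α * fderiv ℝ (fun q => (g q).1) p (1, 0) -
        |p.1| ^ α * fderiv ℝ (fun q => (g q).2) p (0, 1)) +
      Complex.ofReal (fderiv ℝ (fun q => (g q).2) p (1, 0) +
        |p.1 * (g p).1| ^ α * fderiv ℝ (fun q => (g q).1) p (0, 1)) * Complex.I = 0 := by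
  have hdz : DifferentiableAt ℂ gt (φ p) := hgt.differentiableAt (hU.mem_nhds hpU)
  set c : ℂ := fderiv ℂ gt (φ p) 1 with hc
  have happ : ∀ z : ℂ, fderiv ℂ gt (φ p) z = z * c := by
    intro z
    calc fderiv ℂ gt (φ p) z = fderiv ℂ gt (φ p) (z • 1) := by rw [smul_eq_mul, mul_one]
      _ = z • fderiv ℂ gt (φ p) 1 := map_smul _ _ _
      _ = z * c := rfl
  have hgtR : HasFDerivAt gt ((fderiv ℂ gt (φ p)).restrictScalars ℝ) (φ p) :=
    (hdz.hasFDerivAt).restrictScalars ℝ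
  -- derivative of φ
  have hk : HasDerivAt (fun v : ℝ => v * |v| ^ α / (α + 1)) (|p.1| ^ α) p.1 :=
    hasDerivAt_k' α hα hx
  have h1 : HasFDerivAt (fun q : ℝ × ℝ => q.1 * |q.1| ^ α / (α + 1))
      (|p.1| ^ α • ContinuousLinearMap.fst ℝ ℝ ℝ) p :=
    hk.comp_hasFDerivAt p hasFDerivAt_fst
  have h2 : HasFDerivAt (fun q : ℝ × ℝ => (Complex.ofReal (q.1 * |q.1| ^ α / (α + 1))))
      (Complex.ofRealCLM.comp (|p.1| ^ α • ContinuousLinearMap.fst ℝ ℝ ℝ)) p :=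
    Complex.ofRealCLM.hasFDerivAt.comp p h1
  have h3 : HasFDerivAt (fun q : ℝ × ℝ => (Complex.ofReal q.2))
      (Complex.ofRealCLM.comp (ContinuousLinearMap.snd ℝ ℝ ℝ)) p :=
    Complex.ofRealCLM.hasFDerivAt.comp p hasFDerivAt_snd
  have h4 : HasFDerivAt (fun q : ℝ × ℝ => (Complex.ofReal q.2) * Complex.I)
      (Complex.I • (Complex.ofRealCLM.comp (ContinuousLinearMap.snd ℝ ℝ ℝ))) p :=
    h3.mul_const Complex.I
  set Lφ : (ℝ × ℝ) →L[ℝ] ℂ :=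
    Complex.ofRealCLM.comp (|p.1| ^ α • ContinuousLinearMap.fst ℝ ℝ ℝ) +
      Complex.I • (Complex.ofRealCLM.comp (ContinuousLinearMap.snd ℝ ℝ ℝ)) with hLφ
  have hφ' : HasFDerivAt φ Lφ p := by
    have hfun : φ = fun q : ℝ × ℝ => Complex.ofReal (q.1 * |q.1| ^ α / (α + 1)) +
        Complex.ofReal q.2 * Complex.I := funext hφ
    rw [hfun, hLφ]
    exact h2.add h4
  set D : (ℝ × ℝ) →L[ℝ] ℂ := ((fderiv ℂ gt (φ p)).restrictScalars ℝ).comp Lφ with hD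
  have hF : HasFDerivAt (fun q => gt (φ q)) D p := hgtR.comp p hφ'
  have hL1 : Lφ (1, 0) = Complex.ofReal (|p.1| ^ α) := by
    simp [hLφ]
  have hL2 : Lφ (0, 1) = Complex.I := by
    simp [hLφ]
  have hD1 : D (1, 0) = Complex.ofReal (|p.1| ^ α) * c := by
    rw [hD, ContinuousLinearMap.comp_apply, hL1, ContinuousLinearMap.coe_restrictScalars', happ]
  have hD2 : D (0, 1) = Complex.I * c := by
    rw [hD, ContinuousLinearMap.comp_apply, hL2, ContinuousLinearMap.coe_restrictScalars', happ]
  -- second component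
  have hg2fun : (fun q => (g q).2) = fun q => (gt (φ q)).im := by
    funext q; rw [hg q, hψ]
  have hG2 : HasFDerivAt (fun q => (gt (φ q)).im) (Complex.imCLM.comp D) p :=
    Complex.imCLM.hasFDerivAt.comp p hF
  have e3 : fderiv ℝ (fun q => (g q).2) p (1, 0) = |p.1| ^ α * c.im := by
    rw [hg2fun, hG2.fderiv, ContinuousLinearMap.comp_apply, hD1]
    simp
  have e4 : fderiv ℝ (fun q => (g q).2) p (0, 1) = c.re := by
    rw [hg2fun, hG2.fderiv, ContinuousLinearMap.comp_apply, hD2]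
    simp
  -- first component
  set u₀ : ℝ := (gt (φ p)).re with hu₀
  have hgp1 : (g p).1 = Real.sign u₀ * ((α + 1) * |u₀|) ^ (1 / (α + 1)) := by
    rw [hg p, hψ]
  have hg1fun : (fun q => (g q).1) =
      fun q => Real.sign ((gt (φ q)).re) * ((α + 1) * |(gt (φ q)).re|) ^ (1 / (α + 1)) := by
    funext q; rw [hg q, hψ]
  have hu0 : u₀ ≠ 0 := by
    intro h0
    apply hg1
    rw [hgp1, h0]
    simp
  obtain ⟨d, hd⟩ := hasDerivAt_h' α hα hu0
  have hRe : HasFDerivAt (fun q => (gt (φ q)).re) (Complex.reCLM.comp D) p :=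
    Complex.reCLM.hasFDerivAt.comp p hF
  have hG1 : HasFDerivAt
      (fun q => Real.sign ((gt (φ q)).re) * ((α + 1) * |(gt (φ q)).re|) ^ (1 / (α + 1)))
      (d • (Complex.reCLM.comp D)) p := by
    exact hd.comp_hasFDerivAt p hRe
  have e1 : fderiv ℝ (fun q => (g q).1) p (1, 0) = d * (|p.1| ^ α * c.re) := by
    rw [hg1fun, hG1.fderiv, ContinuousLinearMap.smul_apply, ContinuousLinearMap.comp_apply, hD1]
    simp [smul_eq_mul]
  have e2 : fderiv ℝ (fun q => (g q).1) p (0, 1) = d * (-c.im) := by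
    rw [hg1fun, hG1.fderiv, ContinuousLinearMap.smul_apply, ContinuousLinearMap.comp_apply, hD2]
    simp [smul_eq_mul]
  -- key relation |h u₀|^α * d = 1
  have hgp1ne : Real.sign u₀ * ((α + 1) * |u₀|) ^ (1 / (α + 1)) ≠ 0 := hgp1 ▸ hg1
  have hkd : HasDerivAt (fun v : ℝ => v * |v| ^ α / (α + 1))
      (|Real.sign u₀ * ((α + 1) * |u₀|) ^ (1 / (α + 1))| ^ α)
      (Real.sign u₀ * ((α + 1) * |u₀|) ^ (1 / (α + 1))) := hasDerivAt_k' α hα hgp1ne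
  have hcomp : HasDerivAt
      ((fun v : ℝ => v * |v| ^ α / (α + 1)) ∘
        (fun v : ℝ => Real.sign v * ((α + 1) * |v|) ^ (1 / (α + 1))))
      (|Real.sign u₀ * ((α + 1) * |u₀|) ^ (1 / (α + 1))| ^ α * d) u₀ := hkd.comp u₀ hd
  have hidfun : ((fun v : ℝ => v * |v| ^ α / (α + 1)) ∘
      (fun v : ℝ => Real.sign v * ((α + 1) * |v|) ^ (1 / (α + 1)))) = fun u : ℝ => u :=
    funext fun u => k_h_id α hα u
  rw [hidfun] at hcomp
  have hrel : |Real.sign u₀ * ((α + 1) * |u₀|) ^ (1 / (α + 1))| ^ α * d = 1 :=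
    hcomp.unique (hasDerivAt_id u₀)
  -- abbreviation for |g₁ p|
  set H : ℝ := |Real.sign u₀ * ((α + 1) * |u₀|) ^ (1 / (α + 1))| with hH
  have habsgp : |(g p).1| = H := by rw [hgp1, hH]
  -- A = 0
  have hA : |(g p).1| ^ α * fderiv ℝ (fun q => (g q).1) p (1, 0) -
      |p.1| ^ α * fderiv ℝ (fun q => (g q).2) p (0, 1) = 0 := by
    rw [habsgp, e1, e4]
    have : H ^ α * (d * (|p.1| ^ α * c.re)) = (H ^ α * d) * (|p.1| ^ α * c.re) := by ring
    rw [this, hrel, one_mul, sub_self]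
  -- B = 0
  have hB : fderiv ℝ (fun q => (g q).2) p (1, 0) +
      |p.1 * (g p).1| ^ α * fderiv ℝ (fun q => (g q).1) p (0, 1) = 0 := by
    rw [e3, e2, abs_mul, Real.mul_rpow (abs_nonneg _) (abs_nonneg _), habsgp]
    have : |p.1| ^ α * H ^ α * (d * -c.im)
        = |p.1| ^ α * c.im * (-(H ^ α * d)) := by ring
    rw [this, hrel]
    ring
  -- RHS = 0
  have e5 : fderiv ℝ gt (φ p) 1 = c := by
    rw [hgtR.fderiv, ContinuousLinearMap.coe_restrictScalars', happ, one_mul]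
  have e6 : fderiv ℝ gt (φ p) Complex.I = Complex.I * c := by
    rw [hgtR.fderiv, ContinuousLinearMap.coe_restrictScalars', happ]
  have hRHS : fderiv ℝ gt (φ p) 1 + Complex.I * fderiv ℝ gt (φ p) Complex.I = 0 := by
    rw [e5, e6, ← mul_assoc, Complex.I_mul_I]
    ring
  constructor
  · rw [hA, hB, hRHS]
    simp
  · rw [hA, hB]
    simp
end

section
/- Let γ : [a,b] → ℝ² be absolutely continuous with γ₁(t) ≠ 0 for a.e. t, and let g = (g₁,g₂) be C¹ near the image of γ with x ≠ 0 and g₁ ≠ 0 there, satisfying the Grushin Cauchy–Riemann equations ∂ₓg₂ = −|xg₁|^α ∂_y g₁ and |x|^α ∂_y g₂ = |g₁|^α ∂ₓ g₁. Then for a.e. t, the Grushin length element transforms by: √((d/dt g₁(γ))² + |g₁(γ)|^{-2α}(d/dt g₂(γ))²) = |∇_H g₁(γ(t))| · √((γ₁')² + |γ₁|^{-2α}(γ₂')²), where ∇_H g₁ = (∂ₓg₁, |x|^α ∂_y g₁). -/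
/-- Grushin-conformal maps distort the Grushin length element by the conformal
factor `|∇_H g₁|`: at a point `t` where the curve `γ` is differentiable, `γ₁(t) ≠ 0`,
`g` is `C¹` near `γ(t)` with `x ≠ 0`, `g₁ ≠ 0` there, and the Grushin Cauchy–Riemann
equations hold, one has
`√((d/dt g₁∘γ)² + |g₁∘γ|^{-2α}(d/dt g₂∘γ)²) = |∇_H g₁(γ t)| √((γ₁')² + |γ₁|^{-2α}(γ₂')²)`. -/
theorem grushin_length_element_transform (α : ℝ) (hα : 0 < α)
    (V : Set (ℝ × ℝ)) (hV : IsOpen V) (g : ℝ × ℝ → ℝ × ℝ)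
    (hg : ContDiffOn ℝ 1 g V)
    (hVx : ∀ q ∈ V, q.1 ≠ 0) (hVg1 : ∀ q ∈ V, (g q).1 ≠ 0)
    (hCR1 : ∀ q ∈ V, fderiv ℝ (fun w => (g w).2) q (1, 0) =
      -(|q.1 * (g q).1| ^ α) * fderiv ℝ (fun w => (g w).1) q (0, 1))
    (hCR2 : ∀ q ∈ V, |q.1| ^ α * fderiv ℝ (fun w => (g w).2) q (0, 1) =
      |(g q).1| ^ α * fderiv ℝ (fun w => (g w).1) q (1, 0))
    (γ : ℝ → ℝ × ℝ) (t : ℝ) (v : ℝ × ℝ) (hγ : HasDerivAt γ v t) (hγt : γ t ∈ V) :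
    Real.sqrt ((deriv (fun s => (g (γ s)).1) t) ^ 2 +
        |(g (γ t)).1| ^ (-(2 * α)) * (deriv (fun s => (g (γ s)).2) t) ^ 2) =
      Real.sqrt ((fderiv ℝ (fun w => (g w).1) (γ t) (1, 0)) ^ 2 +
          (|(γ t).1| ^ α * fderiv ℝ (fun w => (g w).1) (γ t) (0, 1)) ^ 2) *
        Real.sqrt (v.1 ^ 2 + |(γ t).1| ^ (-(2 * α)) * v.2 ^ 2) := by
  have hx : (γ t).1 ≠ 0 := hVx _ hγt
  have hg1 : (g (γ t)).1 ≠ 0 := hVg1 _ hγt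
  have hdg : DifferentiableAt ℝ g (γ t) :=
    (hg.contDiffAt (hV.mem_nhds hγt)).differentiableAt one_ne_zero
  have hd1 : DifferentiableAt ℝ (fun w => (g w).1) (γ t) := hdg.fst
  have hd2 : DifferentiableAt ℝ (fun w => (g w).2) (γ t) := hdg.snd
  have h1 : HasDerivAt (fun s => (g (γ s)).1) (fderiv ℝ (fun w => (g w).1) (γ t) v) t :=
    hd1.hasFDerivAt.comp_hasDerivAt t hγ
  have h2 : HasDerivAt (fun s => (g (γ s)).2) (fderiv ℝ (fun w => (g w).2) (γ t) v) t :=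
    hd2.hasFDerivAt.comp_hasDerivAt t hγ
  set A := fderiv ℝ (fun w => (g w).1) (γ t) (1, 0) with hA
  set B := fderiv ℝ (fun w => (g w).1) (γ t) (0, 1) with hB
  set a := |(γ t).1| ^ α with ha
  set b := |(g (γ t)).1| ^ α with hb
  have hapos : 0 < a := Real.rpow_pos_of_pos (abs_pos.mpr hx) α
  have hbpos : 0 < b := Real.rpow_pos_of_pos (abs_pos.mpr hg1) α
  have hv : v = v.1 • ((1:ℝ), (0:ℝ)) + v.2 • ((0:ℝ), (1:ℝ)) := by
    simp [Prod.ext_iff]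
  have e1 : fderiv ℝ (fun w => (g w).1) (γ t) v = v.1 * A + v.2 * B := by
    conv_lhs => rw [hv]
    rw [map_add, map_smul, map_smul, ← hA, ← hB, smul_eq_mul, smul_eq_mul]
  have hab : |(γ t).1 * (g (γ t)).1| ^ α = a * b := by
    rw [abs_mul, Real.mul_rpow (abs_nonneg _) (abs_nonneg _)]
  have hC : fderiv ℝ (fun w => (g w).2) (γ t) (1, 0) = -(a * b) * B := by
    rw [hCR1 _ hγt, hab]
  have hD : fderiv ℝ (fun w => (g w).2) (γ t) (0, 1) = b * A / a := by
    have := hCR2 _ hγt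
    field_simp
    linarith [this]
  have e2 : fderiv ℝ (fun w => (g w).2) (γ t) v = v.1 * (-(a * b) * B) + v.2 * (b * A / a) := by
    conv_lhs => rw [hv]
    rw [map_add, map_smul, map_smul, hC, hD, smul_eq_mul, smul_eq_mul]
  have hbn : |(g (γ t)).1| ^ (-(2 * α)) = (b ^ 2)⁻¹ := by
    rw [Real.rpow_neg (abs_nonneg _), hb, mul_comm (2:ℝ) α,
      Real.rpow_mul (abs_nonneg _), Real.rpow_two]
  have hanr : |(γ t).1| ^ (-(2 * α)) = (a ^ 2)⁻¹ := by
    rw [Real.rpow_neg (abs_nonneg _), ha, mul_comm (2:ℝ) α,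
      Real.rpow_mul (abs_nonneg _), Real.rpow_two]
  rw [h1.deriv, h2.deriv, e1, e2, hbn, hanr,
    ← Real.sqrt_mul (by positivity) (v.1 ^ 2 + (a ^ 2)⁻¹ * v.2 ^ 2)]
  congr 1
  field_simp
  ring
end
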